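/- Let A = c·J_n + d·I_n with J_n the all-ones matrix. If every entry of A is strictly positive, then every entry of |A| is strictly positive. -/

import Mathlib

open Matrix

noncomputable def matAbs {n : Type*} [Fintype n] [DecidableEq n] (A : Matrix n n ℝ) :
    Matrix n n ℝ :=
  (Matrix.posSemidef_conjTranspose_mul_self A).1.eigenvectorUnitary.1 *
    diagonal ((↑) ∘ (√·) ∘ (Matrix.posSemidef_conjTranspose_mul_self A).1.eigenvalues) *
    (star (Matrix.posSemidef_conjTranspose_mul_self A).1.eigenvectorUnitary : Matrix n n ℝ)

/-- The all-ones matrix `J = 1ₙ 1ₙᵀ`. -/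
def allOnes (n : ℕ) : Matrix (Fin n) (Fin n) ℝ := Matrix.of fun _ _ => (1 : ℝ)

lemma allOnes_conjTranspose (n : ℕ) : (allOnes n)ᴴ = allOnes n := by
  ext i j; simp [allOnes, conjTranspose_apply]

lemma allOnes_mul_self (n : ℕ) : allOnes n * allOnes n = (n : ℝ) • allOnes n := by
  ext i j; simp [mul_apply, allOnes]

lemma comb_conjTranspose (n : ℕ) (a b : ℝ) :
    (a • allOnes n + b • (1 : Matrix (Fin n) (Fin n) ℝ))ᴴ
      = a • allOnes n + b • (1 : Matrix (Fin n) (Fin n) ℝ) := by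
  rw [conjTranspose_add, conjTranspose_smul, conjTranspose_smul, allOnes_conjTranspose,
    conjTranspose_one, star_trivial, star_trivial]

lemma comb_sq (n : ℕ) (a b : ℝ) :
    (a • allOnes n + b • (1 : Matrix (Fin n) (Fin n) ℝ))
      * (a • allOnes n + b • (1 : Matrix (Fin n) (Fin n) ℝ))
      = ((n : ℝ) * a * a + 2 * (a * b)) • allOnes n
        + (b * b) • (1 : Matrix (Fin n) (Fin n) ℝ) := by
  simp only [add_mul, mul_add, smul_mul_assoc, mul_smul_comm, allOnes_mul_self n,
    one_mul, mul_one, smul_smul]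
  module

lemma dot_allOnes (n : ℕ) (x : Fin n → ℝ) :
    x ⬝ᵥ (allOnes n *ᵥ x) = (∑ i, x i) ^ 2 := by
  simp [dotProduct, mulVec, allOnes, sq, ← Finset.sum_mul]

lemma comb_psd (n : ℕ) (a b : ℝ) (ha : 0 ≤ a) (hb : 0 ≤ b) :
    (a • allOnes n + b • (1 : Matrix (Fin n) (Fin n) ℝ)).PosSemidef := by
  rw [posSemidef_iff_dotProduct_mulVec]
  refine ⟨comb_conjTranspose n a b, fun x => ?_⟩
  have hx : star x = x := by simp
  rw [hx, add_mulVec, dotProduct_add, smul_mulVec, smul_mulVec,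
    dotProduct_smul, dotProduct_smul, one_mulVec, dot_allOnes]
  have h1 : (0:ℝ) ≤ x ⬝ᵥ x := by
    simpa using dotProduct_star_self_nonneg x
  have h2 : (0:ℝ) ≤ (∑ i, x i) ^ 2 := sq_nonneg _
  positivity

lemma matAbs_eq {n : Type*} [Fintype n] [DecidableEq n] (A B : Matrix n n ℝ)
    (hB : B.PosSemidef) (h : B ^ 2 = Aᴴ * A) : matAbs A = B :=
  by
  open scoped MatrixOrder in
  have hP := Matrix.posSemidef_conjTranspose_mul_self A
  have e1 : matAbs A = cfc Real.sqrt (Aᴴ * A) := by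
    rw [hP.1.cfc_eq, IsHermitian.cfc, Unitary.conjStarAlgAut_apply]; rfl
  rw [e1, ← cfcₙ_eq_cfc, ← CFC.sqrt_eq_real_sqrt _ hP.nonneg, ← h, CFC.sqrt_sq B hB.nonneg]

theorem matAbs_pos_of_ones_plus_id_pos (n : ℕ) (c d : ℝ)
    (A : Matrix (Fin n) (Fin n) ℝ)
    (hA : A = c • allOnes n + d • (1 : Matrix (Fin n) (Fin n) ℝ))
    (hpos : ∀ i j, 0 < A i j) :
    ∀ i j, 0 < matAbs A i j := by
  rcases Nat.eq_zero_or_pos n with rfl | hn0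
  · intro i; exact i.elim0
  -- common facts
  have hcd : 0 < c + d := by
    have := hpos ⟨0, hn0⟩ ⟨0, hn0⟩
    rw [hA] at this
    simpa [allOnes, one_apply] using this
  have key : ∃ a b : ℝ, matAbs A = a • allOnes n + b • (1 : Matrix (Fin n) (Fin n) ℝ)
      ∧ (∀ i j : Fin n, 0 < (a • allOnes n + b • (1 : Matrix (Fin n) (Fin n) ℝ)) i j) := by
    rcases eq_or_lt_of_le (Nat.succ_le_of_lt hn0) with h1 | hn2
    · -- n = 1
      have hn1 : n = 1 := h1.symm
      subst hn1
      refine ⟨0, c + d, ?_, ?_⟩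
      · have hAeq : A = (0:ℝ) • allOnes 1 + (c + d) • (1 : Matrix (Fin 1) (Fin 1) ℝ) := by
          rw [hA]; ext i j
          have : i = j := Subsingleton.elim i j
          subst this
          simp [allOnes, one_apply]
        refine matAbs_eq A _ (comb_psd 1 0 (c+d) le_rfl hcd.le) ?_
        rw [← hAeq, sq]
        have hH : Aᴴ = A := by rw [hA]; exact comb_conjTranspose 1 c d
        rw [hH]
      · intro i j
        have : i = j := Subsingleton.elim i j
        subst this
        simpa [allOnes, one_apply] using hcd
    · -- n ≥ 2
      have hn2' : (2 : ℕ) ≤ n := hn2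
      have hc : 0 < c := by
        have := hpos ⟨0, by omega⟩ ⟨1, by omega⟩
        rw [hA] at this
        have hne : (⟨0, by omega⟩ : Fin n) ≠ ⟨1, by omega⟩ := by
          simp [Fin.ext_iff]
        simpa [allOnes, one_apply, hne] using this
      have hH : Aᴴ = A := by rw [hA]; exact comb_conjTranspose n c d
      have hnR : (0:ℝ) < (n:ℝ) := by positivity
      have hnR2 : (2:ℝ) ≤ (n:ℝ) := by exact_mod_cast hn2'
      rcases le_or_gt 0 d with hd | hd
      · -- A itself PSD
        refine ⟨c, d, ?_, ?_⟩
        · refine matAbs_eq A _ (hA ▸ comb_psd n c d hc.le hd) ?_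
          rw [sq, hH, hA]
        · intro i j
          by_cases h : i = j <;> simp [allOnes, one_apply, h] <;> nlinarith
      · -- d < 0
        refine ⟨c + 2*d/(n:ℝ), -d, ?_, ?_⟩
        · have ha : 0 ≤ c + 2*d/(n:ℝ) := by
            have h2 : 0 ≤ (n:ℝ) * c + 2 * d := by nlinarith
            have h3 := div_nonneg h2 hnR.le
            have h4 : ((n:ℝ) * c + 2*d)/(n:ℝ) = c + 2*d/(n:ℝ) := by field_simp
            linarith [h4 ▸ h3]
          refine matAbs_eq A _ (comb_psd n _ _ ha (by linarith)) ?_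
          rw [sq, comb_sq, hH, hA, comb_sq]
          congr 1
          · congr 1
            field_simp
            ring
          · congr 1
            ring
        · intro i j
          have ha' : 0 < c + 2*d/(n:ℝ) := by
            have h2 : 0 < (n:ℝ) * c + 2 * d := by nlinarith
            have := div_pos h2 hnR
            calc (0:ℝ) < ((n:ℝ) * c + 2*d)/(n:ℝ) := this
            _ = c + 2*d/(n:ℝ) := by field_simp
          have hdiag : 0 < c + 2*d/(n:ℝ) + -d := by
            have : d ≤ 2*d/(n:ℝ) := by
              rw [le_div_iff₀ hnR]
              nlinarith
            linarith
          by_cases h : i = j <;> simp [allOnes, one_apply, h] <;> linarith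
  obtain ⟨a, b, hB, hent⟩ := key
  intro i j
  rw [hB]
  exact hent i j
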